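/- arXiv:2106.13073 — 3 statements merged into one kernel-verified Lean document; each statement's English description precedes it below -/
import Mathlib

section
/- If X has the standard Cauchy distribution C(0,1), then for every real t, E[(it - 2X/(1+X^2)) * exp(itX)] = 0, where i is the imaginary unit. -/
open MeasureTheory Real Complex

/-- If `X ~ C(0,1)` (standard Cauchy, density `1/(π(1+x²))`), then for every real `t`,
`E[(it - 2X/(1+X²)) exp(itX)] = 0`. -/
theorem cauchy_char_necessity (t : ℝ) :
    ∫ x : ℝ, ((Complex.I * t - 2 * x / (1 + (x : ℂ) ^ 2)) * Complex.exp (Complex.I * t * x))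
      * (1 / (π * (1 + (x : ℂ) ^ 2))) = 0 := by
  set F : ℝ → ℂ := fun x => ((Complex.I * t - 2 * x / (1 + (x : ℂ) ^ 2)) *
      Complex.exp (Complex.I * t * x)) * (1 / (π * (1 + (x : ℂ) ^ 2))) with hF
  set f : ℝ → ℂ := fun x => Complex.exp (Complex.I * t * x) / (π * (1 + (x : ℂ) ^ 2)) with hf
  have hπ : (π : ℂ) ≠ 0 := by exact_mod_cast Real.pi_ne_zero
  have hne : ∀ x : ℝ, (1 + (x : ℂ) ^ 2) ≠ 0 := by
    intro x
    have h : (1 + (x : ℂ) ^ 2) = ((1 + x ^ 2 : ℝ) : ℂ) := by push_cast; ring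
    rw [h]
    exact_mod_cast (by positivity : (1 + x ^ 2 : ℝ) ≠ 0)
  have hcast : Continuous fun x : ℝ => (x : ℂ) := Complex.continuous_ofReal
  have hden : Continuous fun x : ℝ => (π : ℂ) * (1 + (x : ℂ) ^ 2) :=
    continuous_const.mul (continuous_const.add (hcast.pow 2))
  have hexpc : Continuous fun x : ℝ => Complex.exp (Complex.I * t * x) :=
    Complex.continuous_exp.comp (continuous_const.mul hcast)
  -- derivative
  have hderiv : ∀ x : ℝ, HasDerivAt f (F x) x := by
    intro x
    have hx : HasDerivAt (fun x : ℝ => (x : ℂ)) 1 x := by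
      exact Complex.ofRealCLM.hasDerivAt (x := x)
    have h1 : HasDerivAt (fun x : ℝ => Complex.exp (Complex.I * t * x))
        (Complex.exp (Complex.I * t * x) * (Complex.I * t)) x := by
      have := (hx.const_mul (Complex.I * (t : ℂ))).cexp
      simpa using this
    have hp : HasDerivAt (fun x : ℝ => (x : ℂ) ^ 2) (2 * (x : ℂ)) x := by
      have h := hx.mul hx
      simp only [one_mul, mul_one] at h
      have heq : (fun x : ℝ => (x : ℂ) ^ 2) = fun x : ℝ => (x : ℂ) * (x : ℂ) := by
        funext y; ring
      rw [heq]
      exact h.congr_deriv (by ring)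
    have h2 : HasDerivAt (fun x : ℝ => (π : ℂ) * (1 + (x : ℂ) ^ 2))
        ((π : ℂ) * (2 * x)) x := by
      simpa using ((hasDerivAt_const x (1 : ℂ)).add hp).const_mul (π : ℂ)
    have h := h1.div h2 (mul_ne_zero hπ (hne x))
    have hq : ((π : ℂ) * (1 + (x : ℂ) ^ 2)) ≠ 0 := mul_ne_zero hπ (hne x)
    refine h.congr_deriv (Eq.symm ?_)
    simp only [hF]
    rw [eq_div_iff (pow_ne_zero 2 hq)]
    field_simp [hne x]
  -- norms
  have hnorm : ∀ x : ℝ, ‖(1 / ((π : ℂ) * (1 + (x : ℂ) ^ 2)))‖ = 1 / (π * (1 + x ^ 2)) := by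
    intro x
    have h : ((π : ℂ) * (1 + (x : ℂ) ^ 2)) = ((π * (1 + x ^ 2) : ℝ) : ℂ) := by push_cast; ring
    rw [h, norm_div, Complex.norm_real, norm_one, Real.norm_eq_abs, abs_of_pos (by positivity)]
  have hexp : ∀ x : ℝ, ‖Complex.exp (Complex.I * t * x)‖ = 1 := by
    intro x
    rw [Complex.norm_exp]
    simp [Complex.mul_re]
  have hbase : Integrable (fun x : ℝ => 1 / (π * (1 + x ^ 2))) := by
    simpa [div_eq_mul_inv, mul_comm, one_div] using
      (integrable_inv_one_add_sq).const_mul (1 / π)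
  have hfint : Integrable f := by
    apply hbase.mono'
    · exact (hexpc.div hden (fun x => mul_ne_zero hπ (hne x))).aestronglyMeasurable
    · filter_upwards with x
      refine le_of_eq ?_
      rw [hf]
      simp only
      rw [← mul_one_div, norm_mul, hexp x, one_mul, hnorm x]
  have hbound : ∀ x : ℝ, ‖F x‖ ≤ (|t| + 1) * (1 / (π * (1 + x ^ 2))) := by
    intro x
    rw [hF]
    simp only [norm_mul, hexp, mul_one, hnorm]
    gcongr
    calc ‖Complex.I * t - 2 * x / (1 + (x : ℂ) ^ 2)‖
        ≤ ‖Complex.I * (t : ℂ)‖ + ‖2 * (x : ℂ) / (1 + (x : ℂ) ^ 2)‖ := norm_sub_le _ _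
      _ ≤ |t| + 1 := by
          gcongr
          · simp
          · have h : (2 * (x : ℂ) / (1 + (x : ℂ) ^ 2)) = ((2 * x / (1 + x ^ 2) : ℝ) : ℂ) := by
              push_cast; ring
            rw [h, Complex.norm_real, Real.norm_eq_abs, abs_div,
              abs_of_pos (by positivity : (0:ℝ) < 1 + x ^ 2),
              div_le_one (by positivity), abs_mul, _root_.abs_two]
            nlinarith [sq_nonneg (|x| - 1), abs_nonneg x, _root_.sq_abs x]
  have hFint : Integrable F := by
    apply Integrable.mono' (hbase.const_mul (|t| + 1))
    · have hFcont : Continuous F :=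
        ((continuous_const.sub ((continuous_const.mul hcast).div
          (continuous_const.add (hcast.pow 2)) hne)).mul hexpc).mul
          (continuous_const.div hden (fun x => mul_ne_zero hπ (hne x)))
      exact hFcont.aestronglyMeasurable
    · filter_upwards with x using hbound x
  have := integral_eq_zero_of_hasDerivAt_of_integrable hderiv hFint hfint
  simpa [hF] using this
end

section
/- If X ~ C(0,1) and g(t,x) = (2x/(1+x^2)·t − (t^2 + 2(1−x^2)/(1+x^2)^2))cos(tx) + (2x/(1+x^2)·t + (t^2 + 2(1−x^2)/(1+x^2)^2))sin(tx), then for all t ∈ ℝ, E[g(t,X)] = −(1/2)(t^2 + |t| + 1)e^{−|t|}. -/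
set_option maxHeartbeats 1000000

open MeasureTheory Real Set Complex Filter Topology FourierTransform

lemma intOn_pow_exp {b : ℝ} (hb : 0 < b) (k : ℕ) :
    IntegrableOn (fun x : ℝ => x ^ k * Real.exp (-(b * x))) (Ioi 0) := by
  have hk : (-1:ℝ) < k := by
    have : (0:ℝ) ≤ k := Nat.cast_nonneg k
    linarith
  have := integrableOn_rpow_mul_exp_neg_mul_rpow (p := 1) (s := k) (b := b) hk one_pos hb
  simpa [Real.rpow_one, Real.rpow_natCast] using this

lemma norm_cexp' (c : ℂ) (x : ℝ) : ‖Complex.exp (-(c * x))‖ = Real.exp (-(c.re * x)) := by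
  rw [Complex.norm_exp]
  congr 1
  simp [Complex.neg_re, Complex.mul_re]

lemma intOn_cpow_exp {c : ℂ} (hc : 0 < c.re) (k : ℕ) :
    IntegrableOn (fun x : ℝ => (x : ℂ) ^ k * Complex.exp (-(c * x))) (Ioi 0) := by
  apply (intOn_pow_exp hc k).mono'
  · apply ContinuousOn.aestronglyMeasurable _ measurableSet_Ioi
    fun_prop
  · filter_upwards [ae_restrict_mem measurableSet_Ioi] with x hx
    rw [norm_mul, norm_pow, Complex.norm_real, norm_cexp', Real.norm_eq_abs,
      _root_.abs_of_nonneg (le_of_lt hx)]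

lemma tendsto_cexp_pow {c : ℂ} (hc : 0 < c.re) (j : ℕ) :
    Tendsto (fun x : ℝ => Complex.exp (-(c * x)) * (x:ℂ) ^ j) atTop (𝓝 0) := by
  apply squeeze_zero_norm' (a := fun x : ℝ => x ^ j * Real.exp (-(c.re * x))) ?_ ?_
  · filter_upwards [Filter.eventually_ge_atTop (0:ℝ)] with x hx
    rw [norm_mul, norm_cexp', norm_pow, Complex.norm_real, Real.norm_eq_abs,
      _root_.abs_of_nonneg hx, mul_comm]
  · have := tendsto_rpow_mul_exp_neg_mul_atTop_nhds_zero (j:ℝ) c.re hc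
    apply this.congr'
    filter_upwards [Filter.eventually_ge_atTop (0:ℝ)] with x hx
    rw [Real.rpow_natCast, neg_mul]

lemma laplace_gen {c : ℂ} (hc : 0 < c.re) (k : ℕ) (P P' : ℝ → ℂ)
    (hP : ∀ x : ℝ, HasDerivAt P (P' x) x)
    (heq : ∀ x : ℝ, c * P x - P' x = (x:ℂ) ^ k)
    (hlim : Tendsto (fun x : ℝ => -(Complex.exp (-(c * x)) * P x)) atTop (𝓝 0)) :
    ∫ x in Ioi (0:ℝ), (x:ℂ) ^ k * Complex.exp (-(c * x)) = P 0 := by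
  have key := integral_Ioi_of_hasDerivAt_of_tendsto' (a := 0) (m := 0)
    (f := fun x : ℝ => -(Complex.exp (-(c * x)) * P x))
    (f' := fun x : ℝ => (x:ℂ) ^ k * Complex.exp (-(c * x)))
    (fun x _ => by
      have h1 : HasDerivAt (fun x : ℝ => Complex.exp (-(c * x)))
          (Complex.exp (-(c * x)) * (-c)) x := by
        have h0 : HasDerivAt (fun x : ℝ => -(c * (x:ℂ))) (-c) x := by
          have hx : HasDerivAt (fun x : ℝ => ((x:ℂ))) 1 x := by
            simpa using (hasDerivAt_id x).ofReal_comp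
          simpa using (hx.const_mul c).fun_neg
        exact h0.cexp
      have h2 := (h1.fun_mul (hP x)).fun_neg
      convert h2 using 1
      have := heq x
      calc (x:ℂ)^k * Complex.exp (-(c*x)) = Complex.exp (-(c*x)) * (c * P x - P' x) := by
            rw [this]; ring
        _ = -(Complex.exp (-(c * ↑x)) * -c * P x + Complex.exp (-(c * ↑x)) * P' x) := by ring)
    (intOn_cpow_exp hc k) hlim
  rw [key]
  simp

lemma laplace0 {c : ℂ} (hc : 0 < c.re) :
    ∫ x in Ioi (0:ℝ), Complex.exp (-(c * x)) = 1 / c := by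
  have h := laplace_gen hc 0 (fun _ => 1 / c) (fun _ => 0)
    (fun x => hasDerivAt_const x _)
    (fun x => by
      have hc0 : c ≠ 0 := fun h => by simp [h] at hc
      field_simp
      norm_num)
    (by simpa using ((tendsto_cexp_pow hc 0).mul_const (1/c)).neg)
  simpa using h

lemma laplace1 {c : ℂ} (hc : 0 < c.re) :
    ∫ x in Ioi (0:ℝ), (x:ℂ) * Complex.exp (-(c * x)) = 1 / c ^ 2 := by
  have hc0 : c ≠ 0 := fun h => by simp [h] at hc
  have h := laplace_gen hc 1 (fun x => (x:ℂ) / c + (c ^ 2)⁻¹) (fun _ => c⁻¹)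
    (fun x => by
      have hx : HasDerivAt (fun x : ℝ => ((x:ℂ))) 1 x := by
        simpa using (hasDerivAt_id x).ofReal_comp
      simpa using (hx.div_const c).add_const ((c ^ 2)⁻¹))
    (fun x => by field_simp; ring)
    (by
      have t1 := ((tendsto_cexp_pow hc 1).mul_const (1/c))
      have t2 := ((tendsto_cexp_pow hc 0).mul_const (1/c^2))
      have := (t1.add t2).neg
      simp only [zero_mul, add_zero, zero_add, neg_zero] at this ⊢
      apply this.congr
      intro x; push_cast; ring)
  simpa using h

lemma laplace2 {c : ℂ} (hc : 0 < c.re) :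
    ∫ x in Ioi (0:ℝ), (x:ℂ) ^ 2 * Complex.exp (-(c * x)) = 2 / c ^ 3 := by
  have hc0 : c ≠ 0 := fun h => by simp [h] at hc
  have h := laplace_gen hc 2 (fun x => (x:ℂ)^2 / c + 2 * x / c ^ 2 + 2 / c ^ 3)
    (fun x => 2 * x / c + 2 / c ^ 2)
    (fun x => by
      have hx : HasDerivAt (fun x : ℝ => ((x:ℂ))) 1 x := by
        simpa using (hasDerivAt_id x).ofReal_comp
      have h1 : HasDerivAt (fun x : ℝ => ((x:ℂ)^2)) (2 * x) x := by
        simpa using (hasDerivAt_pow 2 ((x:ℝ):ℂ)).comp_ofReal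
      have h2 := ((h1.div_const c).add ((hx.const_mul 2).div_const (c^2))).add_const
        ((2:ℂ) / c ^ 3)
      simpa using h2)
    (fun x => by
      have hne : c * c ^ 2 * c ^ 3 * (c * c ^ 2) ≠ 0 := by
        simp [hc0, pow_ne_zero]
      field_simp
      ring)
    (by
      have t1 := ((tendsto_cexp_pow hc 2).mul_const (1/c))
      have t2 := ((tendsto_cexp_pow hc 1).mul_const (2/c^2))
      have t3 := ((tendsto_cexp_pow hc 0).mul_const (2/c^3))
      have := ((t1.add t2).add t3).neg
      simp only [zero_mul, add_zero, zero_add, neg_zero] at this ⊢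
      apply this.congr
      intro x; push_cast; ring)
  simpa using h

lemma integrableOn_Iic_of_neg {E : Type*} [NormedAddCommGroup E] {f : ℝ → E}
    (h : IntegrableOn (fun x : ℝ => f (-x)) (Ioi (0:ℝ))) :
    IntegrableOn f (Iic (0:ℝ)) := by
  have A : MeasurableEmbedding fun x : ℝ => -x :=
    (Homeomorph.neg ℝ).isClosedEmbedding.measurableEmbedding
  have : IntegrableOn (fun x : ℝ => f (-x)) (Ici (0:ℝ)) :=
    Iff.mpr integrableOn_Ici_iff_integrableOn_Ioi h
  rw [IntegrableOn, ← Measure.map_neg_eq_self (volume : Measure ℝ),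
    A.restrict_map, A.integrable_map_iff]
  simpa [Function.comp_def, neg_Iic, IntegrableOn] using this

/-- The building-block real function. -/
noncomputable def rFun (a b c d : ℝ) (x : ℝ) : ℝ :=
  (a + b * |x| + c * x ^ 2 + d * x) * Real.exp (-|x|)

lemma rFun_cont (a b c d : ℝ) : Continuous (rFun a b c d) := by
  unfold rFun; fun_prop

lemma intOn_Ioi_poly_exp (a e c : ℝ) :
    IntegrableOn (fun x : ℝ => (a + e * x + c * x ^ 2) * Real.exp (-x)) (Ioi 0) := by
  have h0 := (intOn_pow_exp one_pos 0).const_mul a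
  have h1 := (intOn_pow_exp one_pos 1).const_mul e
  have h2 := (intOn_pow_exp one_pos 2).const_mul c
  have H : IntegrableOn (fun x : ℝ => a * (x ^ 0 * Real.exp (-(1*x)))
      + e * (x ^ 1 * Real.exp (-(1*x))) + c * (x ^ 2 * Real.exp (-(1*x)))) (Ioi 0) :=
    (h0.add h1).add h2
  apply H.congr_fun _ measurableSet_Ioi
  intro x _
  simp only [pow_zero, pow_one, one_mul]
  ring

lemma rFun_int (a b c d : ℝ) : Integrable (rFun a b c d) := by
  have hIoi : IntegrableOn (rFun a b c d) (Ioi 0) := by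
    apply (intOn_Ioi_poly_exp a (b + d) c).congr_fun _ measurableSet_Ioi
    intro x hx
    unfold rFun
    rw [_root_.abs_of_nonneg (le_of_lt hx)]
    ring_nf
  have hIic : IntegrableOn (rFun a b c d) (Iic 0) := by
    apply integrableOn_Iic_of_neg
    apply (intOn_Ioi_poly_exp a (b - d) c).congr_fun _ measurableSet_Ioi
    intro x hx
    simp only [rFun, abs_neg, _root_.abs_of_nonneg (le_of_lt (show (0:ℝ) < x from hx))]
    ring_nf
  have := hIic.union hIoi
  rwa [Iic_union_Ioi, integrableOn_univ] at this

/-- complex version -/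
noncomputable def hFun (a b c d : ℝ) (x : ℝ) : ℂ := (rFun a b c d x : ℂ)

lemma hFun_int (a b c d : ℝ) : Integrable (hFun a b c d) :=
  (rFun_int a b c d).ofReal

lemma cp_re (w : ℝ) : ((1:ℂ) + w * I).re = 1 := by simp
lemma cm_re (w : ℝ) : ((1:ℂ) - w * I).re = 1 := by simp

lemma exp_comb (w x : ℝ) :
    Complex.exp ((-(w * x) : ℝ) * I) * Real.exp (-x)
      = Complex.exp (-(((1:ℂ) + w * I) * x)) := by
  rw [Complex.ofReal_exp, ← Complex.exp_add]
  congr 1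
  push_cast
  ring

lemma exp_comb_neg (w x : ℝ) :
    Complex.exp ((-(w * (-x)) : ℝ) * I) * Real.exp (-x)
      = Complex.exp (-(((1:ℂ) - w * I) * x)) := by
  rw [Complex.ofReal_exp, ← Complex.exp_add]
  congr 1
  push_cast
  ring

lemma key_integrand_int (a b c d w : ℝ) :
    Integrable (fun x : ℝ => Complex.exp ((-(w * x) : ℝ) * I) * (rFun a b c d x : ℂ)) := by
  apply ((rFun_int a b c d).norm).mono'
  · apply Continuous.aestronglyMeasurable
    have := rFun_cont a b c d
    fun_prop
  · filter_upwards with x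
    rw [norm_mul, Complex.norm_exp]
    simp [Complex.norm_real]

lemma ioi_piece (a e c : ℝ) {cc : ℂ} (hcc : 0 < cc.re) :
    ∫ x in Ioi (0:ℝ), ((a:ℂ) * ((x:ℂ) ^ 0 * Complex.exp (-(cc * x)))
        + (e:ℂ) * ((x:ℂ) ^ 1 * Complex.exp (-(cc * x)))
        + (c:ℂ) * ((x:ℂ) ^ 2 * Complex.exp (-(cc * x))))
      = a / cc + e / cc ^ 2 + 2 * c / cc ^ 3 := by
  have i0 : IntegrableOn (fun x : ℝ => (a:ℂ) * ((x:ℂ) ^ 0 * Complex.exp (-(cc * x)))) (Ioi 0) :=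
    (intOn_cpow_exp hcc 0).const_mul _
  have i1 : IntegrableOn (fun x : ℝ => (e:ℂ) * ((x:ℂ) ^ 1 * Complex.exp (-(cc * x)))) (Ioi 0) :=
    (intOn_cpow_exp hcc 1).const_mul _
  have i2 : IntegrableOn (fun x : ℝ => (c:ℂ) * ((x:ℂ) ^ 2 * Complex.exp (-(cc * x)))) (Ioi 0) :=
    (intOn_cpow_exp hcc 2).const_mul _
  have i01 : IntegrableOn (fun x : ℝ => (a:ℂ) * ((x:ℂ) ^ 0 * Complex.exp (-(cc * x)))
      + (e:ℂ) * ((x:ℂ) ^ 1 * Complex.exp (-(cc * x)))) (Ioi 0) := i0.add i1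
  rw [integral_add i01 i2, integral_add i0 i1,
      integral_const_mul, integral_const_mul, integral_const_mul]
  have l0 := laplace0 hcc
  have l1 := laplace1 hcc
  have l2 := laplace2 hcc
  simp only [pow_zero, one_mul, pow_one]
  rw [l0, l1, l2]
  ring

lemma key_integral (a b c d w : ℝ) :
    (∫ x : ℝ, Complex.exp ((-(w * x) : ℝ) * I) * (rFun a b c d x : ℂ))
      = a / (1 + w * I) + (b + d) / (1 + w * I) ^ 2 + 2 * c / (1 + w * I) ^ 3
        + (a / (1 - w * I) + (b - d) / (1 - w * I) ^ 2 + 2 * c / (1 - w * I) ^ 3) := by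
  have hint := key_integrand_int a b c d w
  set f := fun x : ℝ => Complex.exp ((-(w * x) : ℝ) * I) * (rFun a b c d x : ℂ) with hf
  have hIic : IntegrableOn f (Iic 0) := hint.integrableOn
  have hIoi : IntegrableOn f (Ioi 0) := hint.integrableOn
  rw [← intervalIntegral.integral_Iic_add_Ioi hIic hIoi]
  have hcp : (0:ℝ) < ((1:ℂ) + w * I).re := by rw [cp_re]; norm_num
  have hcm : (0:ℝ) < ((1:ℂ) - w * I).re := by rw [cm_re]; norm_num
  have hIoi_eq : ∫ x in Ioi (0:ℝ), f x
      = a / (1 + w * I) + (b + d) / (1 + w * I) ^ 2 + 2 * c / (1 + w * I) ^ 3 := by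
    have congr1 : ∀ x ∈ Ioi (0:ℝ), f x
        = (a : ℂ) * ((x:ℂ) ^ 0 * Complex.exp (-(((1:ℂ) + w * I) * x)))
          + ((b + d : ℝ) : ℂ) * ((x:ℂ) ^ 1 * Complex.exp (-(((1:ℂ) + w * I) * x)))
          + (c : ℂ) * ((x:ℂ) ^ 2 * Complex.exp (-(((1:ℂ) + w * I) * x))) := by
      intro x hx
      rw [hf]
      simp only
      rw [show rFun a b c d x = (a + (b + d) * x + c * x ^ 2) * Real.exp (-x) by
        unfold rFun; rw [_root_.abs_of_nonneg (le_of_lt hx)]; ring]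
      rw [Complex.ofReal_mul, Complex.ofReal_exp,
        show -(((1:ℂ) + ↑w * I) * ↑x) = ↑(-(w * x)) * I + ((-x : ℝ) : ℂ) by push_cast; ring,
        Complex.exp_add]
      push_cast
      ring
    rw [setIntegral_congr_fun measurableSet_Ioi congr1, ioi_piece _ _ _ hcp]
    push_cast
    ring
  have hIic_eq : ∫ x in Iic (0:ℝ), f x
      = a / (1 - w * I) + (b - d) / (1 - w * I) ^ 2 + 2 * c / (1 - w * I) ^ 3 := by
    have hneg : ∫ x in Iic (0:ℝ), f x = ∫ x in Ioi (0:ℝ), f (-x) := by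
      have := _root_.integral_comp_neg_Iic (0:ℝ) (fun y => f (-y))
      simp only [neg_neg, neg_zero] at this
      rw [← this]
    rw [hneg]
    have congr2 : ∀ x ∈ Ioi (0:ℝ), f (-x)
        = (a : ℂ) * ((x:ℂ) ^ 0 * Complex.exp (-(((1:ℂ) - w * I) * x)))
          + ((b - d : ℝ) : ℂ) * ((x:ℂ) ^ 1 * Complex.exp (-(((1:ℂ) - w * I) * x)))
          + (c : ℂ) * ((x:ℂ) ^ 2 * Complex.exp (-(((1:ℂ) - w * I) * x))) := by
      intro x hx
      rw [hf]
      simp only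
      rw [show rFun a b c d (-x) = (a + (b - d) * x + c * x ^ 2) * Real.exp (-x) by
        simp only [rFun, abs_neg, _root_.abs_of_nonneg (le_of_lt (show (0:ℝ) < x from hx))]; ring]
      rw [Complex.ofReal_mul, Complex.ofReal_exp,
        show -(((1:ℂ) - ↑w * I) * ↑x) = ↑(-(w * -x)) * I + ((-x : ℝ) : ℂ) by push_cast; ring,
        Complex.exp_add]
      push_cast
      ring
    rw [setIntegral_congr_fun measurableSet_Ioi congr2, ioi_piece _ _ _ hcm]
    push_cast
    ring
  rw [hIic_eq, hIoi_eq]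
  ring

lemma hFun_ft (a b c d : ℝ) (ξ : ℝ) :
    𝓕 (hFun a b c d) ξ
      = a / (1 + ((2*π*ξ : ℝ) : ℂ) * I) + (b + d) / (1 + ((2*π*ξ : ℝ) : ℂ) * I) ^ 2
          + 2 * c / (1 + ((2*π*ξ : ℝ) : ℂ) * I) ^ 3
        + (a / (1 - ((2*π*ξ : ℝ) : ℂ) * I) + (b - d) / (1 - ((2*π*ξ : ℝ) : ℂ) * I) ^ 2
          + 2 * c / (1 - ((2*π*ξ : ℝ) : ℂ) * I) ^ 3) := by
  rw [Real.fourier_real_eq_integral_exp_smul]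
  have heq : ∀ v : ℝ, Complex.exp (↑(-2 * π * v * ξ) * I) • hFun a b c d v
      = Complex.exp ((-(2*π*ξ * v) : ℝ) * I) * (rFun a b c d v : ℂ) := by
    intro v
    rw [smul_eq_mul, hFun]
    congr 3
    push_cast
    ring
  simp only [heq]
  exact key_integral a b c d (2*π*ξ)

-- nonvanishing facts
lemma u_ne (w : ℝ) : ((1:ℂ) + w * I) ≠ 0 := by
  intro h
  have := congrArg Complex.re h
  simp at this
lemma v_ne (w : ℝ) : ((1:ℂ) - w * I) ≠ 0 := by
  intro h
  have := congrArg Complex.re h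
  simp at this
lemma p_ne (w : ℝ) : (((1 + w^2 : ℝ)) : ℂ) ≠ 0 :=
  Complex.ofReal_ne_zero.mpr (by positivity)
lemma p_ne' (w : ℝ) : ((1:ℂ) + (w:ℂ)^2) ≠ 0 := by
  have := p_ne w
  push_cast at this
  exact this
lemma huv (w : ℝ) : ((1:ℂ) + w * I) * ((1:ℂ) - w * I) = ((1 + w^2 : ℝ) : ℂ) := by
  push_cast
  linear_combination (-(w:ℂ)^2) * Complex.I_sq

lemma S1 (w : ℝ) : 1 / ((1:ℂ) + w * I) + 1 / ((1:ℂ) - w * I) = 2 / ((1 + w^2 : ℝ) : ℂ) := by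
  rw [div_add_div _ _ (u_ne w) (v_ne w), huv]
  congr 1
  ring

lemma S2 (w : ℝ) : 1 / ((1:ℂ) + w * I) ^ 2 + 1 / ((1:ℂ) - w * I) ^ 2
    = ((2 - 2 * w^2 : ℝ) : ℂ) / ((1 + w^2 : ℝ) : ℂ) ^ 2 := by
  rw [div_add_div _ _ (pow_ne_zero 2 (u_ne w)) (pow_ne_zero 2 (v_ne w)), ← mul_pow, huv]
  congr 1
  push_cast
  linear_combination 2 * (w:ℂ)^2 * Complex.I_sq

lemma S3 (w : ℝ) : 1 / ((1:ℂ) + w * I) ^ 3 + 1 / ((1:ℂ) - w * I) ^ 3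
    = ((2 - 6 * w^2 : ℝ) : ℂ) / ((1 + w^2 : ℝ) : ℂ) ^ 3 := by
  rw [div_add_div _ _ (pow_ne_zero 3 (u_ne w)) (pow_ne_zero 3 (v_ne w)), ← mul_pow, huv]
  congr 1
  push_cast
  linear_combination 6 * (w:ℂ)^2 * Complex.I_sq

lemma S4 (w : ℝ) : 1 / ((1:ℂ) + w * I) ^ 2 - 1 / ((1:ℂ) - w * I) ^ 2
    = -(4 * ((w:ℝ):ℂ) * I) / ((1 + w^2 : ℝ) : ℂ) ^ 2 := by
  rw [div_sub_div _ _ (pow_ne_zero 2 (u_ne w)) (pow_ne_zero 2 (v_ne w)), ← mul_pow, huv]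
  congr 1
  ring

lemma E2 (w : ℝ) : (2:ℂ) / ((1 + w^2 : ℝ) : ℂ) + ((2 - 2 * w^2 : ℝ) : ℂ) / ((1 + w^2 : ℝ) : ℂ) ^ 2
    = 4 / ((1 + w^2 : ℝ) : ℂ) ^ 2 := by
  have hp := p_ne' w
  push_cast
  field_simp
  ring

lemma E3 (w : ℝ) : (6:ℂ) / ((1 + w^2 : ℝ) : ℂ) + 3 * ((2 - 2 * w^2 : ℝ) : ℂ) / ((1 + w^2 : ℝ) : ℂ) ^ 2
    + 2 * ((2 - 6 * w^2 : ℝ) : ℂ) / ((1 + w^2 : ℝ) : ℂ) ^ 3 = 16 / ((1 + w^2 : ℝ) : ℂ) ^ 3 := by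
  have hp := p_ne' w
  push_cast
  field_simp
  ring

-- the four rational FT forms
lemma ft1 (ξ : ℝ) : 𝓕 (hFun 1 0 0 0) ξ = 2 / ((1 + (2*π*ξ)^2 : ℝ) : ℂ) := by
  rw [hFun_ft 1 0 0 0 ξ]
  simp only [Complex.ofReal_one, Complex.ofReal_zero]
  linear_combination S1 (2*π*ξ)

lemma ft2 (ξ : ℝ) : 𝓕 (hFun 1 1 0 0) ξ = 4 / ((1 + (2*π*ξ)^2 : ℝ) : ℂ) ^ 2 := by
  rw [hFun_ft 1 1 0 0 ξ]
  simp only [Complex.ofReal_one, Complex.ofReal_zero]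
  linear_combination S1 (2*π*ξ) + S2 (2*π*ξ) + E2 (2*π*ξ)

lemma ft3 (ξ : ℝ) : 𝓕 (hFun 3 3 1 0) ξ = 16 / ((1 + (2*π*ξ)^2 : ℝ) : ℂ) ^ 3 := by
  rw [hFun_ft 3 3 1 0 ξ]
  simp only [Complex.ofReal_one, Complex.ofReal_zero, Complex.ofReal_ofNat]
  linear_combination 3 * S1 (2*π*ξ) + 3 * S2 (2*π*ξ) + 2 * S3 (2*π*ξ) + E3 (2*π*ξ)

lemma ft4 (ξ : ℝ) : 𝓕 (hFun 0 0 0 1) ξ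
    = -(4 * ((2*π*ξ:ℝ):ℂ) * I) / ((1 + (2*π*ξ)^2 : ℝ) : ℂ) ^ 2 := by
  rw [hFun_ft 0 0 0 1 ξ]
  simp only [Complex.ofReal_one, Complex.ofReal_zero]
  linear_combination S4 (2*π*ξ)

lemma one_add_sq_pos (x : ℝ) : (0:ℝ) < 1 + x ^ 2 := by positivity

lemma inv_formula (a b c d : ℝ) (r : ℝ → ℂ)
    (hft : ∀ ξ : ℝ, 𝓕 (hFun a b c d) ξ = r (2 * π * ξ))
    (hint : Integrable (fun ξ : ℝ => r (2 * π * ξ))) (t : ℝ) :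
    ∫ w : ℝ, Complex.exp (((t * w : ℝ) : ℂ) * I) * r w = ((2 * π * rFun a b c d t : ℝ) : ℂ) := by
  have hcont : Continuous (hFun a b c d) := Complex.continuous_ofReal.comp (rFun_cont a b c d)
  have hFTint : Integrable (𝓕 (hFun a b c d)) := by
    apply hint.congr
    filter_upwards with ξ
    exact (hft ξ).symm
  have hinv := (hFun_int a b c d).fourierInv_fourier_eq hFTint (hcont.continuousAt (x := t))
  rw [Real.fourierInv_eq_fourier_neg,
    Real.fourier_real_eq_integral_exp_smul] at hinv
  have heq : ∀ v : ℝ, Complex.exp (↑(-2 * π * v * -t) * I) • 𝓕 (hFun a b c d) v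
      = (fun w => Complex.exp (((t * w : ℝ) : ℂ) * I) * r w) (2 * π * v) := by
    intro v
    rw [smul_eq_mul, hft v]
    simp only
    congr 3
    push_cast
    ring
  rw [integral_congr_ae (Eventually.of_forall heq),
    MeasureTheory.Measure.integral_comp_mul_left (fun w => Complex.exp (((t * w : ℝ) : ℂ) * I) * r w)
      (2 * π)] at hinv
  have h2π : (0:ℝ) < 2 * π := by positivity
  rw [abs_of_pos (inv_pos.mpr h2π)] at hinv
  have := congrArg (fun z : ℂ => ((2 * π : ℝ)) • z) hinv
  simp only [smul_smul, mul_inv_cancel₀ (ne_of_gt h2π), one_smul] at this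
  rw [this, hFun]
  rw [Complex.real_smul]
  push_cast
  ring

lemma split_integral {u v : ℝ → ℝ} {z : ℂ} (hu : Integrable u) (hv : Integrable v)
    (h : (∫ w : ℝ, ((u w : ℂ) + (v w : ℂ) * I)) = z) :
    (∫ w, u w) = z.re ∧ (∫ w, v w) = z.im := by
  have hu' : Integrable (fun w => ((u w : ℝ) : ℂ)) := hu.ofReal
  have hv' : Integrable (fun w => ((v w : ℝ) : ℂ)) := hv.ofReal
  rw [integral_add hu' (hv'.mul_const I), integral_mul_const] at h
  have e1 : (∫ w : ℝ, ((u w : ℝ) : ℂ)) = ((∫ w, u w : ℝ) : ℂ) := integral_ofReal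
  have e2 : (∫ w : ℝ, ((v w : ℝ) : ℂ)) = ((∫ w, v w : ℝ) : ℂ) := integral_ofReal
  rw [e1, e2] at h
  constructor
  · simpa using congrArg Complex.re h
  · simpa using congrArg Complex.im h

lemma p_ne_c (w : ℝ) : (((1 + w^2 : ℝ)) : ℂ) ≠ 0 :=
  Complex.ofReal_ne_zero.mpr (by positivity)

-- integrability helpers
lemma cont_inv_pow (C : ℝ) (n : ℕ) : Continuous (fun x : ℝ => C / (1 + x ^ 2) ^ n) :=
  continuous_const.div (by fun_prop) (fun x => by positivity)

lemma base_int : Integrable (fun x : ℝ => (1 + x ^ 2)⁻¹) := integrable_inv_one_add_sq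

lemma int_of_bound {f : ℝ → ℝ} (hc : Continuous f) (C : ℝ)
    (hb : ∀ x : ℝ, |f x| ≤ C * (1 + x ^ 2)⁻¹) : Integrable f := by
  apply (base_int.const_mul C).mono' hc.aestronglyMeasurable
  filter_upwards with x
  rw [Real.norm_eq_abs]
  exact hb x

lemma pow_le_bound (x : ℝ) (n : ℕ) : ((1 + x ^ 2) ^ (n+1))⁻¹ ≤ (1 + x ^ 2)⁻¹ := by
  have h := one_add_sq_pos x
  apply inv_anti₀ h
  calc 1 + x ^ 2 = (1 + x ^ 2) ^ 1 := (pow_one _).symm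
    _ ≤ (1 + x ^ 2) ^ (n+1) := pow_le_pow_right₀ (by nlinarith) (by omega)

-- generic extraction
lemma caseA (t : ℝ) (F : ℝ → ℝ) (Fc : ℝ → ℂ) (hFc : ∀ w : ℝ, Fc w = ((F w : ℝ) : ℂ))
    (hu : Integrable (fun x : ℝ => Real.cos (t * x) * F x))
    (hv : Integrable (fun x : ℝ => Real.sin (t * x) * F x))
    {z : ℂ}
    (h : (∫ w : ℝ, Complex.exp (((t * w : ℝ) : ℂ) * I) * Fc w) = z) :
    (∫ x : ℝ, Real.cos (t * x) * F x) = z.re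
      ∧ (∫ x : ℝ, Real.sin (t * x) * F x) = z.im := by
  apply split_integral hu hv
  rw [← h]
  apply integral_congr_ae
  filter_upwards with w
  rw [hFc w, Complex.exp_mul_I,
    show Complex.cos ((t * w : ℝ) : ℂ) = ((Real.cos (t * w) : ℝ) : ℂ) from
      (Complex.ofReal_cos _).symm,
    show Complex.sin ((t * w : ℝ) : ℂ) = ((Real.sin (t * w) : ℝ) : ℂ) from
      (Complex.ofReal_sin _).symm]
  push_cast
  ring

lemma caseB (t : ℝ)
    (hu : Integrable (fun x : ℝ => 4 * x * Real.sin (t * x) / (1 + x ^ 2) ^ 2))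
    (hv : Integrable (fun x : ℝ => -(4 * x * Real.cos (t * x)) / (1 + x ^ 2) ^ 2))
    {z : ℂ}
    (h : (∫ w : ℝ, Complex.exp (((t * w : ℝ) : ℂ) * I)
        * (-(4 * ((w:ℝ):ℂ) * I) / ((1 + w ^ 2 : ℝ) : ℂ) ^ 2)) = z) :
    (∫ x : ℝ, 4 * x * Real.sin (t * x) / (1 + x ^ 2) ^ 2) = z.re
      ∧ (∫ x : ℝ, -(4 * x * Real.cos (t * x)) / (1 + x ^ 2) ^ 2) = z.im := by
  apply split_integral hu hv
  rw [← h]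
  apply integral_congr_ae
  filter_upwards with w
  rw [Complex.exp_mul_I,
    show Complex.cos ((t * w : ℝ) : ℂ) = ((Real.cos (t * w) : ℝ) : ℂ) from
      (Complex.ofReal_cos _).symm,
    show Complex.sin ((t * w : ℝ) : ℂ) = ((Real.sin (t * w) : ℝ) : ℂ) from
      (Complex.ofReal_sin _).symm]
  have hp := p_ne_c w
  simp only [Complex.ofReal_div, Complex.ofReal_mul, Complex.ofReal_neg, Complex.ofReal_pow,
    Complex.ofReal_add, Complex.ofReal_one, Complex.ofReal_ofNat]
  linear_combination ((4 * (w:ℂ) * ((Real.sin (t*w) : ℝ) : ℂ))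
    / (((1:ℂ) + (w:ℂ)^2)^2)) * Complex.I_sq

-- integrability of basis integrands
lemma intCos (t K : ℝ) (n : ℕ) :
    Integrable (fun x : ℝ => Real.cos (t * x) * (K / (1 + x ^ 2) ^ (n+1))) := by
  apply int_of_bound ((Real.continuous_cos.comp (by fun_prop)).mul (cont_inv_pow K (n+1))) |K|
  intro x
  have hp := one_add_sq_pos x
  simp only [Pi.mul_apply, Function.comp_apply]
  rw [abs_mul, abs_div, _root_.abs_of_pos (pow_pos hp _)]
  calc |Real.cos (t*x)| * (|K| / (1 + x^2) ^ (n+1))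
      ≤ 1 * (|K| * (1 + x^2)⁻¹) := by
        apply mul_le_mul (Real.abs_cos_le_one _) _ (by positivity) one_pos.le
        rw [div_eq_mul_inv]
        exact mul_le_mul_of_nonneg_left (pow_le_bound x n) (abs_nonneg K)
    _ = |K| * (1 + x^2)⁻¹ := one_mul _

lemma intSin (t K : ℝ) (n : ℕ) :
    Integrable (fun x : ℝ => Real.sin (t * x) * (K / (1 + x ^ 2) ^ (n+1))) := by
  apply int_of_bound ((Real.continuous_sin.comp (by fun_prop)).mul (cont_inv_pow K (n+1))) |K|
  intro x
  have hp := one_add_sq_pos x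
  simp only [Pi.mul_apply, Function.comp_apply]
  rw [abs_mul, abs_div, _root_.abs_of_pos (pow_pos hp _)]
  calc |Real.sin (t*x)| * (|K| / (1 + x^2) ^ (n+1))
      ≤ 1 * (|K| * (1 + x^2)⁻¹) := by
        apply mul_le_mul (Real.abs_sin_le_one _) _ (by positivity) one_pos.le
        rw [div_eq_mul_inv]
        exact mul_le_mul_of_nonneg_left (pow_le_bound x n) (abs_nonneg K)
    _ = |K| * (1 + x^2)⁻¹ := one_mul _

lemma abs_le_one_add_sq (x : ℝ) : |x| ≤ 1 + x ^ 2 := by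
  nlinarith [_root_.sq_abs x, abs_nonneg x, sq_nonneg (|x| - 1)]

lemma intXSin (t : ℝ) :
    Integrable (fun x : ℝ => 4 * x * Real.sin (t * x) / (1 + x ^ 2) ^ 2) := by
  have hcont : Continuous fun x : ℝ => 4 * x * Real.sin (t * x) / (1 + x ^ 2) ^ 2 :=
    Continuous.div (by fun_prop) (by fun_prop) (fun x => by positivity)
  apply int_of_bound hcont 4
  intro x
  have hp := one_add_sq_pos x
  rw [abs_div, _root_.abs_of_pos (pow_pos hp 2), div_le_iff₀ (pow_pos hp 2)]
  have h1 : |4 * x * Real.sin (t*x)| ≤ 4 * |x| := by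
    rw [abs_mul, abs_mul]
    have := Real.abs_sin_le_one (t*x)
    have h4 : |(4:ℝ)| = 4 := by norm_num
    rw [h4]
    nlinarith [abs_nonneg x]
  calc |4 * x * Real.sin (t*x)| ≤ 4 * |x| := h1
    _ ≤ 4 * (1 + x^2) := by nlinarith [abs_le_one_add_sq x]
    _ = 4 * (1 + x^2)⁻¹ * (1 + x^2)^2 := by field_simp

lemma intXCos (t : ℝ) :
    Integrable (fun x : ℝ => -(4 * x * Real.cos (t * x)) / (1 + x ^ 2) ^ 2) := by
  have hcont : Continuous fun x : ℝ => -(4 * x * Real.cos (t * x)) / (1 + x ^ 2) ^ 2 :=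
    Continuous.div (by fun_prop) (by fun_prop) (fun x => by positivity)
  apply int_of_bound hcont 4
  intro x
  have hp := one_add_sq_pos x
  rw [abs_div, _root_.abs_of_pos (pow_pos hp 2), div_le_iff₀ (pow_pos hp 2)]
  have h1 : |(-(4 * x * Real.cos (t*x)))| ≤ 4 * |x| := by
    rw [abs_neg, abs_mul, abs_mul]
    have := Real.abs_cos_le_one (t*x)
    have h4 : |(4:ℝ)| = 4 := by norm_num
    rw [h4]
    nlinarith [abs_nonneg x]
  calc |(-(4 * x * Real.cos (t*x)))| ≤ 4 * |x| := h1
    _ ≤ 4 * (1 + x^2) := by nlinarith [abs_le_one_add_sq x]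
    _ = 4 * (1 + x^2)⁻¹ * (1 + x^2)^2 := by field_simp

-- integrability of the rational FT composed with 2πξ
lemma base2π : Integrable (fun ξ : ℝ => (1 + (2*π*ξ) ^ 2)⁻¹) := by
  have h2π : (2*π : ℝ) ≠ 0 := by positivity
  exact base_int.comp_mul_left' h2π

lemma intFT_real (K : ℝ) (n : ℕ) :
    Integrable (fun ξ : ℝ => ((K / (1 + (2*π*ξ) ^ 2) ^ (n+1) : ℝ) : ℂ)) := by
  have hR : Integrable (fun ξ : ℝ => K / (1 + (2*π*ξ) ^ 2) ^ (n+1)) := by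
    apply (base2π.const_mul |K|).mono'
    · exact ((cont_inv_pow K (n+1)).comp
        (by fun_prop : Continuous (fun ξ:ℝ => 2*π*ξ))).aestronglyMeasurable
    · filter_upwards with ξ
      have hp := one_add_sq_pos (2*π*ξ)
      rw [Real.norm_eq_abs, abs_div, _root_.abs_of_pos (pow_pos hp _)]
      calc |K| / (1 + (2*π*ξ)^2) ^ (n+1) = |K| * ((1 + (2*π*ξ)^2) ^ (n+1))⁻¹ := by
            rw [div_eq_mul_inv]
        _ ≤ |K| * (1 + (2*π*ξ)^2)⁻¹ :=
            mul_le_mul_of_nonneg_left (pow_le_bound (2*π*ξ) n) (abs_nonneg K)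
  exact hR.ofReal

lemma intFT4 : Integrable (fun ξ : ℝ =>
    -(4 * ((2*π*ξ:ℝ):ℂ) * I) / ((1 + (2*π*ξ)^2 : ℝ) : ℂ) ^ 2) := by
  apply (base2π.const_mul 4).mono'
  · apply Continuous.aestronglyMeasurable
    apply Continuous.div
    · fun_prop
    · fun_prop
    · intro ξ
      exact pow_ne_zero 2 (p_ne_c (2*π*ξ))
  · filter_upwards with ξ
    have hp := one_add_sq_pos (2*π*ξ)
    have hnorm : ‖-(4 * ((2*π*ξ:ℝ):ℂ) * I) / ((1 + (2*π*ξ)^2 : ℝ) : ℂ) ^ 2‖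
        = (4 * |2*π*ξ|) / (1 + (2*π*ξ)^2) ^ 2 := by
      rw [norm_div, norm_neg, norm_mul, norm_mul, norm_pow, Complex.norm_real,
        Complex.norm_real, Complex.norm_I, mul_one]
      rw [Real.norm_eq_abs, Real.norm_eq_abs, _root_.abs_of_pos hp]
      norm_num
    rw [hnorm, div_le_iff₀ (pow_pos hp 2)]
    have h1 : |2*π*ξ| ≤ 1 + (2*π*ξ)^2 := abs_le_one_add_sq _
    have h2 : (4:ℝ) * (1 + (2*π*ξ)^2)⁻¹ * ((1 + (2*π*ξ)^2)^2) = 4 * (1 + (2*π*ξ)^2) := by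
      field_simp
    rw [h2]
    linarith

-- now the eight basis integral values
lemma res1 (t : ℝ) :
    (∫ x : ℝ, Real.cos (t * x) * (2 / (1 + x ^ 2) ^ (0+1))) = 2 * π * Real.exp (-|t|)
      ∧ (∫ x : ℝ, Real.sin (t * x) * (2 / (1 + x ^ 2) ^ (0+1))) = 0 := by
  have h := inv_formula 1 0 0 0 (fun w => (2:ℂ) / ((1 + w^2 : ℝ) : ℂ) ^ (0+1))
    (fun ξ => by simpa using ft1 ξ) (by simpa using intFT_real 2 0) t
  have hc := caseA t (fun x => 2 / (1 + x ^ 2) ^ (0+1))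
    (fun w => (2:ℂ) / ((1 + w^2 : ℝ) : ℂ) ^ (0+1))
    (fun w => by push_cast; ring) (intCos t 2 0) (intSin t 2 0) h
  have hr : rFun 1 0 0 0 t = Real.exp (-|t|) := by unfold rFun; ring
  rw [hr] at hc
  simp only [Complex.ofReal_re, Complex.ofReal_im] at hc
  exact hc

lemma res2 (t : ℝ) :
    (∫ x : ℝ, Real.cos (t * x) * (4 / (1 + x ^ 2) ^ (1+1))) = 2 * π * ((1 + |t|) * Real.exp (-|t|))
      ∧ (∫ x : ℝ, Real.sin (t * x) * (4 / (1 + x ^ 2) ^ (1+1))) = 0 := by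
  have h := inv_formula 1 1 0 0 (fun w => (4:ℂ) / ((1 + w^2 : ℝ) : ℂ) ^ (1+1))
    (fun ξ => by simpa using ft2 ξ) (by simpa using intFT_real 4 1) t
  have hc := caseA t (fun x => 4 / (1 + x ^ 2) ^ (1+1))
    (fun w => (4:ℂ) / ((1 + w^2 : ℝ) : ℂ) ^ (1+1))
    (fun w => by push_cast; ring) (intCos t 4 1) (intSin t 4 1) h
  have hr : rFun 1 1 0 0 t = (1 + |t|) * Real.exp (-|t|) := by unfold rFun; ring
  rw [hr] at hc
  simp only [Complex.ofReal_re, Complex.ofReal_im] at hc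
  exact hc

lemma res3 (t : ℝ) :
    (∫ x : ℝ, Real.cos (t * x) * (16 / (1 + x ^ 2) ^ (2+1)))
        = 2 * π * ((3 + 3*|t| + t^2) * Real.exp (-|t|))
      ∧ (∫ x : ℝ, Real.sin (t * x) * (16 / (1 + x ^ 2) ^ (2+1))) = 0 := by
  have h := inv_formula 3 3 1 0 (fun w => (16:ℂ) / ((1 + w^2 : ℝ) : ℂ) ^ (2+1))
    (fun ξ => by simpa using ft3 ξ) (by simpa using intFT_real 16 2) t
  have hc := caseA t (fun x => 16 / (1 + x ^ 2) ^ (2+1))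
    (fun w => (16:ℂ) / ((1 + w^2 : ℝ) : ℂ) ^ (2+1))
    (fun w => by push_cast; ring) (intCos t 16 2) (intSin t 16 2) h
  have hr : rFun 3 3 1 0 t = (3 + 3*|t| + t^2) * Real.exp (-|t|) := by unfold rFun; ring
  rw [hr] at hc
  simp only [Complex.ofReal_re, Complex.ofReal_im] at hc
  exact hc

lemma res4 (t : ℝ) :
    (∫ x : ℝ, 4 * x * Real.sin (t * x) / (1 + x ^ 2) ^ 2) = 2 * π * (t * Real.exp (-|t|))
      ∧ (∫ x : ℝ, -(4 * x * Real.cos (t * x)) / (1 + x ^ 2) ^ 2) = 0 := by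
  have h := inv_formula 0 0 0 1
    (fun w => -(4 * ((w:ℝ):ℂ) * I) / ((1 + w ^ 2 : ℝ) : ℂ) ^ 2)
    (fun ξ => by simpa using ft4 ξ) (by simpa using intFT4) t
  have hc := caseB t (intXSin t) (intXCos t) h
  have hr : rFun 0 0 0 1 t = t * Real.exp (-|t|) := by unfold rFun; ring
  rw [hr] at hc
  simp only [Complex.ofReal_re, Complex.ofReal_im] at hc
  exact hc


/-- The function `g(t,x)` arising from the Taylor expansion of the test statistic. -/
noncomputable def gFun (t x : ℝ) : ℝ :=
  (2 * x / (1 + x ^ 2) * t - (t ^ 2 + 2 * (1 - x ^ 2) / (1 + x ^ 2) ^ 2)) * Real.cos (t * x)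
    + (2 * x / (1 + x ^ 2) * t + (t ^ 2 + 2 * (1 - x ^ 2) / (1 + x ^ 2) ^ 2)) * Real.sin (t * x)

/-- If `X ~ C(0,1)`, then `E[g(t,X)] = -(1/2)(t² + |t| + 1) e^{-|t|}` for all `t`. -/
theorem cauchy_Eg (t : ℝ) :
    (∫ x : ℝ, gFun t x * (1 / (π * (1 + x ^ 2))))
      = -(1 / 2) * (t ^ 2 + |t| + 1) * Real.exp (-|t|) := by
  obtain ⟨hA1, hB1⟩ := res1 t
  obtain ⟨hA2, hB2⟩ := res2 t
  obtain ⟨hA3, hB3⟩ := res3 t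
  obtain ⟨hA4, hB4⟩ := res4 t
  have hπ : (0:ℝ) < π := Real.pi_pos
  have J1 : Integrable (fun x : ℝ => (-(t^2)/(2*π)) * (Real.cos (t*x) * (2/(1+x^2)^(0+1)))) := (intCos t 2 0).const_mul _
  have J2 : Integrable (fun x : ℝ => ((t^2)/(2*π)) * (Real.sin (t*x) * (2/(1+x^2)^(0+1)))) := (intSin t 2 0).const_mul _
  have J3 : Integrable (fun x : ℝ => (1/(2*π)) * (Real.cos (t*x) * (4/(1+x^2)^(1+1)))) := (intCos t 4 1).const_mul _
  have J4 : Integrable (fun x : ℝ => (-(1:ℝ)/(2*π)) * (Real.sin (t*x) * (4/(1+x^2)^(1+1)))) := (intSin t 4 1).const_mul _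
  have J5 : Integrable (fun x : ℝ => (-(1:ℝ)/(4*π)) * (Real.cos (t*x) * (16/(1+x^2)^(2+1)))) := (intCos t 16 2).const_mul _
  have J6 : Integrable (fun x : ℝ => (1/(4*π)) * (Real.sin (t*x) * (16/(1+x^2)^(2+1)))) := (intSin t 16 2).const_mul _
  have J7 : Integrable (fun x : ℝ => (t/(2*π)) * (4*x*Real.sin (t*x)/(1+x^2)^2)) := (intXSin t).const_mul _
  have J8 : Integrable (fun x : ℝ => (-(t)/(2*π)) * (-(4*x*Real.cos (t*x))/(1+x^2)^2)) := (intXCos t).const_mul _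
  have P2 : Integrable (fun x : ℝ => (-(t^2)/(2*π)) * (Real.cos (t*x) * (2/(1+x^2)^(0+1))) + ((t^2)/(2*π)) * (Real.sin (t*x) * (2/(1+x^2)^(0+1)))) := J1.add J2
  have P3 : Integrable (fun x : ℝ => (-(t^2)/(2*π)) * (Real.cos (t*x) * (2/(1+x^2)^(0+1))) + ((t^2)/(2*π)) * (Real.sin (t*x) * (2/(1+x^2)^(0+1))) + (1/(2*π)) * (Real.cos (t*x) * (4/(1+x^2)^(1+1)))) := P2.add J3
  have P4 : Integrable (fun x : ℝ => (-(t^2)/(2*π)) * (Real.cos (t*x) * (2/(1+x^2)^(0+1))) + ((t^2)/(2*π)) * (Real.sin (t*x) * (2/(1+x^2)^(0+1))) + (1/(2*π)) * (Real.cos (t*x) * (4/(1+x^2)^(1+1))) + (-(1:ℝ)/(2*π)) * (Real.sin (t*x) * (4/(1+x^2)^(1+1)))) := P3.add J4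
  have P5 : Integrable (fun x : ℝ => (-(t^2)/(2*π)) * (Real.cos (t*x) * (2/(1+x^2)^(0+1))) + ((t^2)/(2*π)) * (Real.sin (t*x) * (2/(1+x^2)^(0+1))) + (1/(2*π)) * (Real.cos (t*x) * (4/(1+x^2)^(1+1))) + (-(1:ℝ)/(2*π)) * (Real.sin (t*x) * (4/(1+x^2)^(1+1))) + (-(1:ℝ)/(4*π)) * (Real.cos (t*x) * (16/(1+x^2)^(2+1)))) := P4.add J5
  have P6 : Integrable (fun x : ℝ => (-(t^2)/(2*π)) * (Real.cos (t*x) * (2/(1+x^2)^(0+1))) + ((t^2)/(2*π)) * (Real.sin (t*x) * (2/(1+x^2)^(0+1))) + (1/(2*π)) * (Real.cos (t*x) * (4/(1+x^2)^(1+1))) + (-(1:ℝ)/(2*π)) * (Real.sin (t*x) * (4/(1+x^2)^(1+1))) + (-(1:ℝ)/(4*π)) * (Real.cos (t*x) * (16/(1+x^2)^(2+1))) + (1/(4*π)) * (Real.sin (t*x) * (16/(1+x^2)^(2+1)))) := P5.add J6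
  have P7 : Integrable (fun x : ℝ => (-(t^2)/(2*π)) * (Real.cos (t*x) * (2/(1+x^2)^(0+1))) + ((t^2)/(2*π)) * (Real.sin (t*x) * (2/(1+x^2)^(0+1))) + (1/(2*π)) * (Real.cos (t*x) * (4/(1+x^2)^(1+1))) + (-(1:ℝ)/(2*π)) * (Real.sin (t*x) * (4/(1+x^2)^(1+1))) + (-(1:ℝ)/(4*π)) * (Real.cos (t*x) * (16/(1+x^2)^(2+1))) + (1/(4*π)) * (Real.sin (t*x) * (16/(1+x^2)^(2+1))) + (t/(2*π)) * (4*x*Real.sin (t*x)/(1+x^2)^2)) := P6.add J7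
  have P8 : Integrable (fun x : ℝ => (-(t^2)/(2*π)) * (Real.cos (t*x) * (2/(1+x^2)^(0+1))) + ((t^2)/(2*π)) * (Real.sin (t*x) * (2/(1+x^2)^(0+1))) + (1/(2*π)) * (Real.cos (t*x) * (4/(1+x^2)^(1+1))) + (-(1:ℝ)/(2*π)) * (Real.sin (t*x) * (4/(1+x^2)^(1+1))) + (-(1:ℝ)/(4*π)) * (Real.cos (t*x) * (16/(1+x^2)^(2+1))) + (1/(4*π)) * (Real.sin (t*x) * (16/(1+x^2)^(2+1))) + (t/(2*π)) * (4*x*Real.sin (t*x)/(1+x^2)^2) + (-(t)/(2*π)) * (-(4*x*Real.cos (t*x))/(1+x^2)^2)) := P7.add J8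
  have hdec : ∀ x : ℝ, gFun t x * (1 / (π * (1 + x ^ 2)))
      = (-(t^2)/(2*π)) * (Real.cos (t*x) * (2/(1+x^2)^(0+1)))
        + ((t^2)/(2*π)) * (Real.sin (t*x) * (2/(1+x^2)^(0+1)))
        + (1/(2*π)) * (Real.cos (t*x) * (4/(1+x^2)^(1+1)))
        + (-(1:ℝ)/(2*π)) * (Real.sin (t*x) * (4/(1+x^2)^(1+1)))
        + (-(1:ℝ)/(4*π)) * (Real.cos (t*x) * (16/(1+x^2)^(2+1)))
        + (1/(4*π)) * (Real.sin (t*x) * (16/(1+x^2)^(2+1)))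
        + (t/(2*π)) * (4*x*Real.sin (t*x)/(1+x^2)^2)
        + (-(t)/(2*π)) * (-(4*x*Real.cos (t*x))/(1+x^2)^2) := by
    intro x
    have hx0 : (1 + x^2 : ℝ) ≠ 0 := (one_add_sq_pos x).ne'
    have hπ0 : (π : ℝ) ≠ 0 := hπ.ne'
    unfold gFun
    field_simp
    ring
  rw [integral_congr_ae (Eventually.of_forall hdec)]
  rw [integral_add P7 J8, integral_add P6 J7, integral_add P5 J6, integral_add P4 J5, integral_add P3 J4, integral_add P2 J3, integral_add J1 J2]
  rw [integral_const_mul, integral_const_mul, integral_const_mul, integral_const_mul,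
    integral_const_mul, integral_const_mul, integral_const_mul, integral_const_mul]
  rw [hA1, hB1, hA2, hB2, hA3, hB3, hA4, hB4]
  have hπ0 : (π : ℝ) ≠ 0 := hπ.ne'
  field_simp
  ring
end

section
/- Fix real numbers y_1,…,y_n and define T_{n,a} as the double sum statistic with tuning parameter a > 0 (as in the Cauchy test with weight e^{−a|t|}). Then lim_{a→∞} a·T_{n,a} = 8 ( Σ_{j=1}^n y_j/(1+y_j^2) )^2 / n. -/
open Filter Set Finset

private lemma hv_aux (d : ℝ) : Tendsto (fun a : ℝ => 1 / (d ^ 2 + a ^ 2)) atTop (nhds 0) :=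
  Tendsto.div_atTop tendsto_const_nhds
    (tendsto_atTop_add_const_left _ _ (tendsto_pow_atTop two_ne_zero))

private lemma hu_aux (d : ℝ) : Tendsto (fun a : ℝ => a ^ 2 / (d ^ 2 + a ^ 2)) atTop (nhds 1) := by
  have h1 : Tendsto (fun a : ℝ => 1 - d ^ 2 * (1 / (d ^ 2 + a ^ 2))) atTop
      (nhds (1 - d ^ 2 * 0)) := tendsto_const_nhds.sub ((hv_aux d).const_mul _)
  rw [mul_zero, sub_zero] at h1
  refine h1.congr' ?_
  filter_upwards [eventually_ge_atTop (1 : ℝ)] with a ha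
  have hpos : 0 < d ^ 2 + a ^ 2 := by nlinarith
  field_simp
  ring

private lemma pair_limit (c1 c2 yj yk d : ℝ) (hc1 : 0 < c1) (hc2 : 0 < c2) :
    Tendsto (fun a : ℝ => a * (8 * a * yj * yk / (c1 * c2 * (d ^ 2 + a ^ 2))
        - 16 * a * yj * d / (c1 * (d ^ 2 + a ^ 2) ^ 2)
        + (4 * a ^ 3 - 12 * a * d ^ 2) / (d ^ 2 + a ^ 2) ^ 3)) atTop
      (nhds (8 * yj * yk / (c1 * c2))) := by
  have hu := hu_aux d
  have hv := hv_aux d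
  have H : Tendsto (fun a : ℝ =>
      8 * yj * yk / (c1 * c2) * (a ^ 2 / (d ^ 2 + a ^ 2))
      - 16 * yj * d / c1 * ((a ^ 2 / (d ^ 2 + a ^ 2)) * (1 / (d ^ 2 + a ^ 2)))
      + (4 * ((a ^ 2 / (d ^ 2 + a ^ 2)) ^ 2 * (1 / (d ^ 2 + a ^ 2)))
        - 12 * d ^ 2 * (a ^ 2 / (d ^ 2 + a ^ 2)) * (1 / (d ^ 2 + a ^ 2)) * (1 / (d ^ 2 + a ^ 2)))) atTop
      (nhds (8 * yj * yk / (c1 * c2) * 1 - 16 * yj * d / c1 * (1 * 0)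
        + (4 * (1 ^ 2 * 0) - 12 * d ^ 2 * 1 * 0 * 0))) := by
    exact ((hu.const_mul _).sub ((hu.mul hv).const_mul _)).add
      ((((hu.pow 2).mul hv).const_mul 4).sub (((hu.const_mul (12 * d ^ 2)).mul hv).mul hv))
  have H' := H
  rw [show (8 * yj * yk / (c1 * c2) * 1 - 16 * yj * d / c1 * (1 * 0)
        + (4 * (1 ^ 2 * 0) - 12 * d ^ 2 * 1 * 0 * 0)) = 8 * yj * yk / (c1 * c2) by ring] at H'
  refine H'.congr' ?_
  filter_upwards [eventually_ge_atTop (1 : ℝ)] with a ha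
  have hpos : 0 < d ^ 2 + a ^ 2 := by nlinarith
  field_simp

/-- The statistic `T_{n,a}` satisfies
`lim_{a→∞} a T_{n,a} = (8/n) (Σⱼ yⱼ/(1+yⱼ²))²`. -/
theorem Tna_limit_infty (n : ℕ) (hn : 0 < n) (y : Fin n → ℝ) :
    Tendsto (fun a : ℝ =>
        a * ((1 / (n : ℝ)) * ∑ j, ∑ k,
          (8 * a * y j * y k /
              ((1 + (y j) ^ 2) * (1 + (y k) ^ 2) * ((y j - y k) ^ 2 + a ^ 2))
            - 16 * a * y j * (y j - y k) /
              ((1 + (y j) ^ 2) * ((y j - y k) ^ 2 + a ^ 2) ^ 2)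
            + (4 * a ^ 3 - 12 * a * (y j - y k) ^ 2) / ((y j - y k) ^ 2 + a ^ 2) ^ 3)))
      atTop
      (nhds (8 * (∑ j, y j / (1 + (y j) ^ 2)) ^ 2 / (n : ℝ))) := by
  have hC : ∀ j : Fin n, (0 : ℝ) < 1 + (y j) ^ 2 := fun j => by positivity
  -- per-pair limits
  have hpair : ∀ j k : Fin n, Tendsto (fun a : ℝ =>
      a * (8 * a * y j * y k /
              ((1 + (y j) ^ 2) * (1 + (y k) ^ 2) * ((y j - y k) ^ 2 + a ^ 2))
            - 16 * a * y j * (y j - y k) /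
              ((1 + (y j) ^ 2) * ((y j - y k) ^ 2 + a ^ 2) ^ 2)
            + (4 * a ^ 3 - 12 * a * (y j - y k) ^ 2) / ((y j - y k) ^ 2 + a ^ 2) ^ 3)) atTop
      (nhds (8 * y j * y k / ((1 + (y j) ^ 2) * (1 + (y k) ^ 2)))) :=
    fun j k => pair_limit _ _ _ _ _ (hC j) (hC k)
  have hsum : Tendsto (fun a : ℝ =>
      (1 / (n : ℝ)) * ∑ j, ∑ k, a * (8 * a * y j * y k /
              ((1 + (y j) ^ 2) * (1 + (y k) ^ 2) * ((y j - y k) ^ 2 + a ^ 2))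
            - 16 * a * y j * (y j - y k) /
              ((1 + (y j) ^ 2) * ((y j - y k) ^ 2 + a ^ 2) ^ 2)
            + (4 * a ^ 3 - 12 * a * (y j - y k) ^ 2) / ((y j - y k) ^ 2 + a ^ 2) ^ 3)) atTop
      (nhds ((1 / (n : ℝ)) * ∑ j, ∑ k,
        8 * y j * y k / ((1 + (y j) ^ 2) * (1 + (y k) ^ 2)))) := by
    refine Tendsto.const_mul _ ?_
    exact tendsto_finset_sum _ fun j _ => tendsto_finset_sum _ fun k _ => hpair j k
  have hval : (1 / (n : ℝ)) * ∑ j, ∑ k,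
      8 * y j * y k / ((1 + (y j) ^ 2) * (1 + (y k) ^ 2))
      = 8 * (∑ j, y j / (1 + (y j) ^ 2)) ^ 2 / (n : ℝ) := by
    have h1 : ∀ j k : Fin n, 8 * y j * y k / ((1 + (y j) ^ 2) * (1 + (y k) ^ 2))
        = 8 * ((y j / (1 + (y j) ^ 2)) * (y k / (1 + (y k) ^ 2))) := by
      intro j k
      rw [div_mul_div_comm]
      ring
    have h2 : ∑ j, ∑ k, (8 : ℝ) * ((y j / (1 + (y j) ^ 2)) * (y k / (1 + (y k) ^ 2)))
        = 8 * (∑ j, y j / (1 + (y j) ^ 2)) ^ 2 := by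
      rw [sq, Finset.sum_mul_sum]
      simp only [Finset.mul_sum]
    simp_rw [h1]
    rw [h2]
    ring
  rw [← hval]
  refine hsum.congr fun a => ?_
  simp_rw [← Finset.mul_sum]
  ring
end
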